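/- Let r ≥ 1 and n ≥ 1 be integers. In the ring of formal power series ℚ[[t]], let G be the series with constant coefficient 0 and [t^m]G = r/m if r does not divide m, and [t^m]G = 0 if r divides m. Then [t^n] exp(G) = C(n+r−1, r−1) − C(n−1, r−1), where exp(G) = Σ_{ℓ≥0} G^ℓ/ℓ! is obtained by substituting G into the exponential power series, and C(a, b) denotes the binomial coefficient (equal to 0 when a < b). -/

import Mathlib

open PowerSeries Finset

/-- Substitution of a power series `G` with zero constant coefficient into `f`:
the coefficient of `tⁿ` in `f(G)` is `Σ_{k=0}^{n} ([t^k]f)·([tⁿ](G^k))`. -/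
noncomputable def substInto {A : Type*} [CommRing A] (G f : PowerSeries A) : PowerSeries A :=
  PowerSeries.mk fun n =>
    ∑ k ∈ Finset.range (n + 1), PowerSeries.coeff (R := A) k f * PowerSeries.coeff (R := A) n (G ^ k)

namespace MorrisAux

lemma coeff_pow_eq_zero {G : ℚ⟦X⟧} (hG : constantCoeff (R := ℚ) G = 0) {m k : ℕ} (h : m < k) :
    coeff (R := ℚ) m (G ^ k) = 0 := by
  have hd : (X : ℚ⟦X⟧) ^ k ∣ G ^ k :=
    pow_dvd_pow_of_dvd (PowerSeries.X_dvd_iff.mpr hG) k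
  exact PowerSeries.X_pow_dvd_iff.mp hd m h

lemma coeff_substInto_exp {G : ℚ⟦X⟧} (n : ℕ) :
    coeff (R := ℚ) n (substInto G (PowerSeries.exp ℚ)) =
      ∑ k ∈ range (n + 1), ((k.factorial : ℚ))⁻¹ * coeff (R := ℚ) n (G ^ k) := by
  simp [substInto, coeff_exp, one_div]

lemma coeff_substInto_exp' {G : ℚ⟦X⟧} (hG : constantCoeff (R := ℚ) G = 0) {b n : ℕ} (hb : b ≤ n) :
    coeff (R := ℚ) b (substInto G (PowerSeries.exp ℚ)) =
      ∑ k ∈ range (n + 1), ((k.factorial : ℚ))⁻¹ * coeff (R := ℚ) b (G ^ k) := by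
  rw [coeff_substInto_exp]
  apply Finset.sum_subset
  · intro x hx; simp only [mem_range] at *; omega
  · intro x hx hx2
    simp only [mem_range, not_lt] at hx2
    rw [coeff_pow_eq_zero hG (by omega), mul_zero]

/-- the key analytic fact: `exp(G)` satisfies `y' = G'·y`. -/
lemma deriv_substInto_exp {G : ℚ⟦X⟧} (hG : constantCoeff (R := ℚ) G = 0) :
    d⁄dX ℚ (substInto G (PowerSeries.exp ℚ)) = d⁄dX ℚ G * substInto G (PowerSeries.exp ℚ) := by
  set E := substInto G (PowerSeries.exp ℚ) with hE
  ext n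
  have lhs1 : coeff (R := ℚ) n (d⁄dX ℚ E) =
      ∑ k ∈ range (n + 2), ((k.factorial : ℚ))⁻¹ * (coeff (R := ℚ) (n+1) (G ^ k) * (n+1)) := by
    rw [PowerSeries.coeff_derivative, coeff_substInto_exp, Finset.sum_mul]
    exact Finset.sum_congr rfl fun k _ => by ring
  have key : ∀ k : ℕ, coeff (R := ℚ) (n+1) (G ^ k) * (n+1) = coeff (R := ℚ) n (d⁄dX ℚ (G ^ k)) := by
    intro k; rw [PowerSeries.coeff_derivative]
  rw [lhs1]
  simp only [key]
  rw [Finset.sum_range_succ']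
  have h0 : ((Nat.factorial 0 : ℚ))⁻¹ * coeff (R := ℚ) n (d⁄dX ℚ (G ^ 0)) = 0 := by simp
  rw [h0, add_zero]
  have hterm : ∀ j : ℕ, ((Nat.factorial (j+1) : ℚ))⁻¹ * coeff (R := ℚ) n (d⁄dX ℚ (G ^ (j+1)))
      = ((Nat.factorial j : ℚ))⁻¹ * coeff (R := ℚ) n (d⁄dX ℚ G * G ^ j) := by
    intro j
    have hd : d⁄dX ℚ (G ^ (j+1)) = (j+1 : ℕ) • (G ^ j * d⁄dX ℚ G) := by
      rw [Derivation.leibniz_pow]; simp [smul_eq_mul]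
    rw [hd, map_nsmul, nsmul_eq_mul, Nat.factorial_succ, mul_comm (G ^ j)]
    have hne : ((j:ℚ)+1) ≠ 0 := by positivity
    push_cast
    field_simp
  simp only [hterm]
  rw [PowerSeries.coeff_mul]
  have hrhs : ∀ p ∈ antidiagonal n, coeff (R := ℚ) p.1 (d⁄dX ℚ G) * coeff (R := ℚ) p.2 E
      = ∑ k ∈ range (n+1), ((k.factorial : ℚ))⁻¹ * (coeff (R := ℚ) p.1 (d⁄dX ℚ G) * coeff (R := ℚ) p.2 (G ^ k)) := by
    intro p hp
    have hp2 : p.2 ≤ n := Finset.HasAntidiagonal.antidiagonal.snd_le hp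
    rw [coeff_substInto_exp' hG hp2, Finset.mul_sum]
    exact Finset.sum_congr rfl fun k _ => by ring
  rw [Finset.sum_congr rfl hrhs, Finset.sum_comm]
  refine Finset.sum_congr rfl fun k _ => ?_
  rw [PowerSeries.coeff_mul, Finset.mul_sum]

/-- Uniqueness for first-order linear ODEs in `ℚ⟦X⟧`. -/
lemma ode_zero (P Q y : ℚ⟦X⟧) (hP : constantCoeff (R := ℚ) P = 1)
    (h : d⁄dX ℚ y * P = Q * y) (h0 : constantCoeff (R := ℚ) y = 0) : y = 0 := by
  have key : ∀ n : ℕ, coeff (R := ℚ) n y = 0 := by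
    intro n
    induction n using Nat.strong_induction_on with
    | _ n ih =>
      match n with
      | 0 => simpa using h0
      | m + 1 =>
        have hc := congrArg (coeff (R := ℚ) m) h
        rw [PowerSeries.coeff_mul, PowerSeries.coeff_mul] at hc
        have hR : ∑ p ∈ antidiagonal m, coeff (R := ℚ) p.1 Q * coeff (R := ℚ) p.2 y = 0 := by
          apply Finset.sum_eq_zero
          intro p hp
          rw [ih p.2 (by have := Finset.HasAntidiagonal.antidiagonal.snd_le hp; omega), mul_zero]
        rw [hR, Finset.Nat.sum_antidiagonal_eq_sum_range_succ_mk, Finset.sum_range_succ] at hc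
        have hz : ∑ k ∈ range m, coeff (R := ℚ) k (d⁄dX ℚ y) * coeff (R := ℚ) (m - k) P = 0 := by
          apply Finset.sum_eq_zero
          intro k hk
          simp only [mem_range] at hk
          rw [PowerSeries.coeff_derivative, ih (k+1) (by omega), zero_mul, zero_mul]
        rw [hz, zero_add, Nat.sub_self, PowerSeries.coeff_derivative,
          PowerSeries.coeff_zero_eq_constantCoeff, hP, mul_one] at hc
        have : ((m:ℚ) + 1) ≠ 0 := by positivity
        exact (mul_eq_zero.mp hc).resolve_right (by exact_mod_cast this)
  ext n
  simp [key n]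

/-- geometric series inverse: `(1 - X^q) * Σ_{q ∣ m} X^m = 1` for `q ≥ 1`. -/
lemma one_sub_pow_mul_geom {q : ℕ} (hq : 1 ≤ q) :
    (1 - X ^ q) * (PowerSeries.mk fun m => if q ∣ m then (1 : ℚ) else 0) = 1 := by
  set S := PowerSeries.mk fun m => if q ∣ m then (1 : ℚ) else 0 with hS
  ext n
  rw [sub_mul, one_mul, map_sub, mul_comm, PowerSeries.coeff_mul_X_pow']
  rcases le_or_gt q n with h | h
  · rw [if_pos h]
    have hdvd : q ∣ n ↔ q ∣ n - q := by
      constructor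
      · intro hd; exact (Nat.dvd_sub hd dvd_rfl)
      · intro hd; have : n = (n - q) + q := by omega
        rw [this]; exact Nat.dvd_add hd dvd_rfl
    have hn0 : n ≠ 0 := by omega
    simp only [hS, coeff_mk, PowerSeries.coeff_one, if_neg hn0]
    by_cases hd : q ∣ n
    · rw [if_pos hd, if_pos (hdvd.mp hd), sub_self]
    · rw [if_neg hd, if_neg (fun hh => hd (hdvd.mpr hh)), sub_self]
  · rw [if_neg (by omega), sub_zero]
    simp only [hS, coeff_mk, PowerSeries.coeff_one]
    rcases Nat.eq_zero_or_pos n with rfl | hn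
    · simp
    · have h1 : ¬ q ∣ n := fun hd => by have := Nat.le_of_dvd hn hd; omega
      rw [if_neg h1, if_neg (by omega : ¬ n = 0)]

noncomputable def Gs (r : ℕ) : ℚ⟦X⟧ :=
  PowerSeries.mk fun m => if r ∣ m then 0 else (r : ℚ) / (m : ℚ)

lemma constantCoeff_Gs (r : ℕ) : constantCoeff (R := ℚ) (Gs r) = 0 := by
  rw [← PowerSeries.coeff_zero_eq_constantCoeff_apply]
  simp [Gs]

lemma deriv_Gs {r : ℕ} (hr : 1 ≤ r) :
    d⁄dX ℚ (Gs r) =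
      C (R := ℚ) (r : ℚ) * (PowerSeries.mk fun m => if 1 ∣ m then (1 : ℚ) else 0)
      - C (R := ℚ) (r : ℚ) * (X ^ (r - 1) * PowerSeries.mk fun m => if r ∣ m then (1 : ℚ) else 0) := by
  ext m
  rw [PowerSeries.coeff_derivative]
  simp only [Gs, coeff_mk, map_sub, PowerSeries.coeff_C_mul, mul_comm (X ^ (r-1)),
    PowerSeries.coeff_mul_X_pow', coeff_mk]
  have hiff : (r - 1 ≤ m ∧ r ∣ m - (r - 1)) ↔ r ∣ m + 1 := by
    constructor
    · rintro ⟨h1, c, hc⟩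
      exact ⟨c + 1, by rw [Nat.mul_add, Nat.mul_one]; omega⟩
    · rintro ⟨c, hc⟩
      have hc1 : 1 ≤ c := by rcases Nat.eq_zero_or_pos c with rfl | h; omega; exact h
      obtain ⟨d, rfl⟩ := Nat.exists_eq_add_of_le hc1
      rw [Nat.mul_add, Nat.mul_one] at hc
      exact ⟨by omega, d, by omega⟩
  by_cases hd : r ∣ m + 1
  · obtain ⟨ha, hb⟩ := hiff.mpr hd
    rw [if_pos hd, if_pos (one_dvd m), if_pos ha, if_pos hb]
    ring
  · have hnest : (if r - 1 ≤ m then (if r ∣ m - (r - 1) then (1:ℚ) else 0) else 0) = 0 := by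
      by_cases h1 : r - 1 ≤ m
      · rw [if_pos h1, if_neg (fun h2 => hd (hiff.mp ⟨h1, h2⟩))]
      · rw [if_neg h1]
    rw [if_neg hd, if_pos (one_dvd m), hnest]
    have hm1 : ((m : ℚ) + 1) ≠ 0 := by positivity
    push_cast
    field_simp
    simp

lemma keyG {r : ℕ} (hr : 1 ≤ r) :
    d⁄dX ℚ (Gs r) * ((1 - X) * (1 - X ^ r)) = C (R := ℚ) (r : ℚ) * (1 - X ^ (r - 1)) := by
  have h1 : ((1 : ℚ⟦X⟧) - X ^ 1) * (PowerSeries.mk fun m => if 1 ∣ m then (1 : ℚ) else 0) = 1 :=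
    one_sub_pow_mul_geom le_rfl
  rw [pow_one] at h1
  have h2 : ((1 : ℚ⟦X⟧) - X ^ r) * (PowerSeries.mk fun m => if r ∣ m then (1 : ℚ) else 0) = 1 :=
    one_sub_pow_mul_geom hr
  have h3 : (X : ℚ⟦X⟧) ^ (r - 1) * X = X ^ r := by
    rw [← pow_succ, Nat.sub_add_cancel hr]
  rw [deriv_Gs hr]
  linear_combination (C (R := ℚ) (r:ℚ) * (1 - X^r)) * h1 - (C (R := ℚ) (r:ℚ) * X^(r-1) * (1-X)) * h2
    + (C (R := ℚ) (r:ℚ)) * h3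

noncomputable def Fs (r : ℕ) : ℚ⟦X⟧ := (1 - X ^ r) * (invOneSubPow ℚ r).val

lemma ode_Fs {r : ℕ} (hr : 1 ≤ r) :
    d⁄dX ℚ (Fs r) * ((1 - X) * (1 - X ^ r)) = (C (R := ℚ) (r : ℚ) * (1 - X ^ (r - 1))) * Fs r := by
  set U : ℚ⟦X⟧ := (invOneSubPow ℚ r).val with hU
  have e1 : U * (1 - X) ^ r = 1 := by
    have := (invOneSubPow ℚ r).val_inv
    rwa [invOneSubPow_inv_eq_one_sub_pow] at this
  have e3 : ((1 : ℚ⟦X⟧) - X) ^ (r - 1) * (1 - X) = (1 - X) ^ r := by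
    rw [← pow_succ, Nat.sub_add_cancel hr]
  have e4 : (X : ℚ⟦X⟧) ^ (r - 1) * X = X ^ r := by
    rw [← pow_succ, Nat.sub_add_cancel hr]
  have hdone : d⁄dX ℚ ((1 : ℚ⟦X⟧) - X) = -1 := by
    rw [map_sub]; simp
  have hdV : d⁄dX ℚ (((1 : ℚ⟦X⟧) - X) ^ r) = -(C (R := ℚ) (r : ℚ) * (1 - X) ^ (r - 1)) := by
    rw [Derivation.leibniz_pow, hdone]
    simp [smul_eq_mul, nsmul_eq_mul, map_natCast]
  have hdXr : d⁄dX ℚ ((X : ℚ⟦X⟧) ^ r) = C (R := ℚ) (r : ℚ) * X ^ (r - 1) := by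
    rw [Derivation.leibniz_pow, derivative_X]
    simp [smul_eq_mul, nsmul_eq_mul, map_natCast]
  have e2 : (1 - X) ^ r * d⁄dX ℚ U = C (R := ℚ) (r : ℚ) * U * (1 - X) ^ (r - 1) := by
    have h0 := congrArg (d⁄dX ℚ) e1
    rw [Derivation.leibniz, hdV, Derivation.map_one_eq_zero] at h0
    simp only [smul_eq_mul] at h0
    linear_combination h0
  have e5 : d⁄dX ℚ (Fs r) = -(C (R := ℚ) (r : ℚ) * X ^ (r - 1)) * U + (1 - X ^ r) * d⁄dX ℚ U := by
    rw [Fs, Derivation.leibniz]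
    simp only [smul_eq_mul, map_sub, Derivation.map_one_eq_zero, hdXr]
    ring
  have hV : ((1 : ℚ⟦X⟧) - X) ^ r ≠ 0 := by
    apply pow_ne_zero
    intro h
    have := congrArg (constantCoeff (R := ℚ)) h
    simp at this
  apply mul_right_cancel₀ hV
  rw [e5, Fs]
  linear_combination ((1-X)*(1-X^r)^2) * e2 + (C (R := ℚ) (r:ℚ) * U * (1-X^r)^2) * e3
    + (C (R := ℚ) (r:ℚ)*(1-X^r)^2 - C (R := ℚ) (r:ℚ)*X^(r-1)*(1-X)*(1-X^r)
       - C (R := ℚ) (r:ℚ)*(1-X^(r-1))*(1-X^r)) * e1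
    + (C (R := ℚ) (r:ℚ)*(1-X^r)) * e4

lemma substInto_eq_Fs {r : ℕ} (hr : 1 ≤ r) :
    substInto (Gs r) (PowerSeries.exp ℚ) = Fs r := by
  set E := substInto (Gs r) (PowerSeries.exp ℚ) with hE
  have hEode : d⁄dX ℚ E * ((1 - X) * (1 - X ^ r)) = (C (R := ℚ) (r : ℚ) * (1 - X ^ (r - 1))) * E := by
    rw [deriv_substInto_exp (constantCoeff_Gs r), mul_comm (d⁄dX ℚ (Gs r)) E, mul_assoc,
      keyG hr]
    ring
  have hFode := ode_Fs hr
  have hrne : r ≠ 0 := by omega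
  have hP : constantCoeff (R := ℚ) ((1 - X) * (1 - X ^ r)) = 1 := by
    rw [map_mul, map_sub, map_sub]
    simp [hrne]
  have hE0 : constantCoeff (R := ℚ) E = 1 := by
    rw [← PowerSeries.coeff_zero_eq_constantCoeff_apply, hE, coeff_substInto_exp]
    simp
  have hF0 : constantCoeff (R := ℚ) (Fs r) = 1 := by
    rw [Fs, map_mul, map_sub]
    have hU0 : constantCoeff (R := ℚ) (invOneSubPow ℚ r).val = 1 := by
      rw [invOneSubPow_val_eq_mk_sub_one_add_choose_of_pos ℚ r (by omega : 0 < r),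
        ← PowerSeries.coeff_zero_eq_constantCoeff_apply]
      simp
    simp [hU0, hrne]
  have hdiff : E - Fs r = 0 := by
    apply ode_zero ((1 - X) * (1 - X ^ r)) (C (R := ℚ) (r : ℚ) * (1 - X ^ (r - 1))) _ hP
    · rw [map_sub]
      linear_combination hEode - hFode
    · rw [map_sub, hE0, hF0, sub_self]
  exact sub_eq_zero.mp hdiff

lemma coeff_Fs {r n : ℕ} (hr : 1 ≤ r) (hn : 1 ≤ n) :
    coeff (R := ℚ) n (Fs r) =
      ((n + r - 1).choose (r - 1) : ℚ) - ((n - 1).choose (r - 1) : ℚ) := by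
  rw [Fs, invOneSubPow_val_eq_mk_sub_one_add_choose_of_pos ℚ r (by omega : 0 < r), sub_mul, one_mul,
    map_sub, mul_comm, PowerSeries.coeff_mul_X_pow', coeff_mk]
  have h1 : r - 1 + n = n + r - 1 := by omega
  rw [h1]
  rcases le_or_gt r n with h | h
  · rw [if_pos h, coeff_mk]
    have h2 : r - 1 + (n - r) = n - 1 := by omega
    rw [h2]
  · rw [if_neg (by omega)]
    have h3 : (n - 1).choose (r - 1) = 0 := Nat.choose_eq_zero_of_lt (by omega)
    rw [h3]
    push_cast
    ring

end MorrisAux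

/-- **Morris's identity (generalizing Schur's).**
With `[t^m]G = r/m` if `r ∤ m` and `0` if `r ∣ m`, the coefficient of `tⁿ` in `exp(G)`
equals `C(n+r−1, r−1) − C(n−1, r−1)`. -/
theorem morris_identity (r n : ℕ) (hr : 1 ≤ r) (hn : 1 ≤ n) :
    PowerSeries.coeff (R := ℚ) n
        (substInto (PowerSeries.mk fun m => if r ∣ m then 0 else (r : ℚ) / (m : ℚ))
          (PowerSeries.exp ℚ)) =
      ((n + r - 1).choose (r - 1) : ℚ) - ((n - 1).choose (r - 1) : ℚ) := by
  have : (PowerSeries.mk fun m => if r ∣ m then 0 else (r : ℚ) / (m : ℚ)) = MorrisAux.Gs r := rfl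
  rw [this, MorrisAux.substInto_eq_Fs hr, MorrisAux.coeff_Fs hr hn]
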